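/- For 1 ≤ i < j ≤ 4 let E_{ij} denote the 4×4 real skew-symmetric matrix with (i,j) entry 1, (j,i) entry −1, and all other entries 0. Let Λ⁺ be the real span of {E₁₂+E₃₄, E₁₃−E₂₄, E₁₄+E₂₃} and Λ⁻ the real span of {E₁₂−E₃₄, E₁₃+E₂₄, E₁₄−E₂₃}. Let F be any 4×4 real skew-symmetric matrix, and write F = F⁺ + F⁻ with F⁺ ∈ Λ⁺ and F⁻ ∈ Λ⁻. Then the trace-free part of F² satisfies F² − (trace(F²)/4)·I = 2·F⁺·F⁻, where I is the 4×4 identity matrix. -/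

import Mathlib

open Matrix

/-- The elementary skew-symmetric matrix `E i j`, with `(i,j)` entry `1`,
`(j,i)` entry `-1`, and all other entries `0`. -/
def skewBasisMatrix (i j : Fin 4) : Matrix (Fin 4) (Fin 4) ℝ :=
  Matrix.single i j 1 - Matrix.single j i 1

/-- The space `Λ⁺` of self-dual 2-forms on `ℝ⁴`, viewed as skew-symmetric matrices. -/
def selfDualForms : Submodule ℝ (Matrix (Fin 4) (Fin 4) ℝ) :=
  Submodule.span ℝ
    {skewBasisMatrix 0 1 + skewBasisMatrix 2 3,
     skewBasisMatrix 0 2 - skewBasisMatrix 1 3,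
     skewBasisMatrix 0 3 + skewBasisMatrix 1 2}

/-- The space `Λ⁻` of anti-self-dual 2-forms on `ℝ⁴`, viewed as skew-symmetric matrices. -/
def antiSelfDualForms : Submodule ℝ (Matrix (Fin 4) (Fin 4) ℝ) :=
  Submodule.span ℝ
    {skewBasisMatrix 0 1 - skewBasisMatrix 2 3,
     skewBasisMatrix 0 2 + skewBasisMatrix 1 3,
     skewBasisMatrix 0 3 - skewBasisMatrix 1 2}

/-- The submodule of all `4 × 4` real skew-symmetric matrices. -/
def skewSymmMatrices : Submodule ℝ (Matrix (Fin 4) (Fin 4) ℝ) where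
  carrier := {A | Aᵀ = -A}
  add_mem' := by
    intro a b ha hb
    simp only [Set.mem_setOf_eq] at *
    rw [Matrix.transpose_add, ha, hb, neg_add]
  zero_mem' := by simp
  smul_mem' := by
    intro c a ha
    simp only [Set.mem_setOf_eq] at *
    rw [Matrix.transpose_smul, ha, smul_neg]

set_option maxHeartbeats 4000000 in
/-- The key pointwise identity `[F∘F]₀ = 2F⁺∘F⁻`: for a skew-symmetric `F`
written as `F = F⁺ + F⁻` with `F⁺ ∈ Λ⁺` and `F⁻ ∈ Λ⁻`, the trace-free part of
`F²` equals `2·F⁺·F⁻`. -/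
theorem traceFree_sq_eq_two_smul_mul
    (F Fp Fm : Matrix (Fin 4) (Fin 4) ℝ)
    (hF : Fᵀ = -F) (hFp : Fp ∈ selfDualForms) (hFm : Fm ∈ antiSelfDualForms)
    (hsum : F = Fp + Fm) :
    F * F - ((F * F).trace / 4) • (1 : Matrix (Fin 4) (Fin 4) ℝ) =
      (2 : ℝ) • (Fp * Fm) := by
  rw [selfDualForms, Submodule.mem_span_insert] at hFp
  obtain ⟨a, u, hu, rfl⟩ := hFp
  rw [Submodule.mem_span_insert] at hu
  obtain ⟨b, v, hv, rfl⟩ := hu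
  rw [Submodule.mem_span_singleton] at hv
  obtain ⟨c, rfl⟩ := hv
  rw [antiSelfDualForms, Submodule.mem_span_insert] at hFm
  obtain ⟨d, u', hu', rfl⟩ := hFm
  rw [Submodule.mem_span_insert] at hu'
  obtain ⟨e, v', hv', rfl⟩ := hu'
  rw [Submodule.mem_span_singleton] at hv'
  obtain ⟨f, rfl⟩ := hv'
  subst hsum
  ext i j
  fin_cases i <;> fin_cases j <;>
    simp [skewBasisMatrix, Matrix.mul_apply, Fin.sum_univ_four, Matrix.trace,
      Matrix.single, Matrix.one_apply, Matrix.diag] <;> ring
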